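/- arXiv:1902.04203 — 2 statements merged into one kernel-verified Lean document; each statement's English description precedes it below -/
import Mathlib

section
/- The number of primitive Dirichlet characters modulo q equals Σ_{d·r = q} μ(d)·φ(r), where the sum is over factorizations q = d·r with d, r positive integers. -/
open ArithmeticFunction DirichletCharacter

namespace StmtAux

variable {q : ℕ}

lemma units_decomp [NeZero q] {a b : ℕ} (ha : a ∣ q) (hb : b ∣ q)
    (u : (ZMod q)ˣ) (hu : ZMod.unitsMap ((Nat.gcd_dvd_left a b).trans ha) u = 1) :
    ∃ v w : (ZMod q)ˣ, u = v * w ∧ ZMod.unitsMap ha v = 1 ∧ ZMod.unitsMap hb w = 1 := by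
  set g := Nat.gcd a b with hg
  set l := Nat.lcm a b with hl
  have hlq : l ∣ q := Nat.lcm_dvd ha hb
  haveI : NeZero l := ⟨fun h0 => NeZero.ne q (Nat.eq_zero_of_zero_dvd (h0 ▸ hlq))⟩
  set X : ℤ := ((u : ZMod q).val : ℤ) with hX
  -- X is congruent to 1 mod g
  have hXg : (g : ℤ) ∣ X - 1 := by
    have h1 : ((X : ZMod g) : ZMod g) = 1 := by
      have := congrArg (fun t : (ZMod g)ˣ => (t : ZMod g)) hu
      simp only [ZMod.unitsMap_def, Units.coe_map, Units.val_one] at this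
      rw [← this]
      push_cast [hX]
      rw [ZMod.natCast_val]
      simp [ZMod.castHom_apply]
    have := (ZMod.intCast_zmod_eq_zero_iff_dvd (X - 1) g).mp (by push_cast; rw [h1]; ring)
    exact this
  obtain ⟨k, hk⟩ := hXg
  set s : ℤ := Nat.gcdA a b with hs
  set t : ℤ := Nat.gcdB a b with ht
  have hbez : (g : ℤ) = a * s + b * t := Nat.gcd_eq_gcd_ab a b
  set m : ℤ := 1 + k * s * a with hm
  have hma : (a : ℤ) ∣ m - 1 := ⟨k * s, by rw [hm]; ring⟩
  have hmb : (b : ℤ) ∣ m - X := ⟨-(k * t), by rw [hm]; linear_combination (-1 : ℤ) * hk + (-k) * hbez⟩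
  -- m is coprime to l
  have hXq : IsCoprime X (q : ℤ) := by
    rw [hX, Nat.isCoprime_iff_coprime]
    exact ZMod.val_coe_unit_coprime u
  have hcopa : IsCoprime m (a : ℤ) := by
    obtain ⟨c, hc⟩ := hma
    have : m = 1 + a * c := by linarith
    rw [this]
    exact (isCoprime_one_left.add_mul_left_left c)
  have hcopb : IsCoprime m (b : ℤ) := by
    obtain ⟨c, hc⟩ := hmb
    have : m = X + b * c := by linarith
    rw [this]
    exact (hXq.of_isCoprime_of_dvd_right (Int.natCast_dvd_natCast.mpr hb)).add_mul_left_left c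
  have hcopl : IsCoprime m (l : ℤ) := by
    refine (hcopa.mul_right hcopb).of_isCoprime_of_dvd_right ?_
    exact_mod_cast Int.natCast_dvd_natCast.mpr (Nat.lcm_dvd_mul a b)
  -- construct the unit v' in ZMod l
  have hunit : IsUnit ((m : ZMod l)) := by
    obtain ⟨x, y, hxy⟩ := hcopl
    refine IsUnit.of_mul_eq_one ((x : ZMod l)) ?_
    have : (((x * m + y * l : ℤ)) : ZMod l) = 1 := by rw [hxy]; norm_cast
    push_cast at this
    rw [ZMod.natCast_self, mul_zero, add_zero] at this
    rw [mul_comm]; exact this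
  obtain ⟨v, hv⟩ := ZMod.unitsMap_surjective hlq hunit.unit
  refine ⟨v, v⁻¹ * u, (by group), ?_, ?_⟩
  · -- unitsMap ha v = 1
    apply Units.ext
    have hcomp : ZMod.unitsMap ha v
        = ZMod.unitsMap (Nat.dvd_lcm_left a b) (ZMod.unitsMap hlq v) := by
      rw [← MonoidHom.comp_apply, ZMod.unitsMap_comp]
    rw [hcomp, hv]
    show (ZMod.castHom (Nat.dvd_lcm_left a b) (ZMod a)) ((m : ZMod l)) = 1
    rw [map_intCast]
    have : ((m - 1 : ℤ) : ZMod a) = 0 := (ZMod.intCast_zmod_eq_zero_iff_dvd _ _).mpr hma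
    push_cast at this
    rw [sub_eq_zero] at this
    simpa using this
  · -- unitsMap hb (v⁻¹ * u) = 1
    rw [map_mul, map_inv]
    have hvb : (ZMod.unitsMap hb v : ZMod b) = (X : ZMod b) := by
      have hcomp : ZMod.unitsMap hb v
          = ZMod.unitsMap (Nat.dvd_lcm_right a b) (ZMod.unitsMap hlq v) := by
        rw [← MonoidHom.comp_apply, ZMod.unitsMap_comp]
      rw [hcomp, hv]
      show (ZMod.castHom (Nat.dvd_lcm_right a b) (ZMod b)) ((m : ZMod l)) = (X : ZMod b)
      rw [map_intCast]
      have : ((m - X : ℤ) : ZMod b) = 0 := (ZMod.intCast_zmod_eq_zero_iff_dvd _ _).mpr hmb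
      push_cast at this
      rw [sub_eq_zero] at this
      exact this
    have hub : (ZMod.unitsMap hb u : ZMod b) = (X : ZMod b) := by
      show (ZMod.castHom hb (ZMod b)) ((u : ZMod q)) = (X : ZMod b)
      rw [hX]
      push_cast
      rw [ZMod.natCast_val]
      simp [ZMod.castHom_apply]
    have : ZMod.unitsMap hb v = ZMod.unitsMap hb u := Units.ext (hvb.trans hub.symm)
    rw [this, inv_mul_cancel]

lemma factorsThrough_gcd [NeZero q] (χ : DirichletCharacter ℂ q) {a b : ℕ}
    (ha : χ.FactorsThrough a) (hb : χ.FactorsThrough b) :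
    χ.FactorsThrough (Nat.gcd a b) := by
  have hga : Nat.gcd a b ∣ q := (Nat.gcd_dvd_left a b).trans ha.dvd
  rw [factorsThrough_iff_ker_unitsMap hga]
  intro u hu
  rw [MonoidHom.mem_ker] at hu ⊢
  obtain ⟨v, w, rfl, hv, hw⟩ := units_decomp ha.dvd hb.dvd u hu
  have hva := (factorsThrough_iff_ker_unitsMap ha.dvd).mp ha (MonoidHom.mem_ker.mpr hv)
  have hwb := (factorsThrough_iff_ker_unitsMap hb.dvd).mp hb (MonoidHom.mem_ker.mpr hw)
  rw [MonoidHom.mem_ker] at hva hwb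
  rw [map_mul, hva, hwb, one_mul]

lemma conductor_dvd_of_factorsThrough [NeZero q] {χ : DirichletCharacter ℂ q} {d : ℕ}
    (h : χ.FactorsThrough d) : χ.conductor ∣ d := by
  have hg := factorsThrough_gcd χ (factorsThrough_conductor χ) h
  have h1 : χ.conductor ≤ Nat.gcd χ.conductor d := Nat.sInf_le hg
  have h2 : Nat.gcd χ.conductor d ∣ χ.conductor := Nat.gcd_dvd_left _ _
  have hpos : 0 < Nat.gcd χ.conductor d := by
    have := conductor_ne_zero χ
    exact Nat.pos_of_ne_zero fun h0 => this (Nat.eq_zero_of_gcd_eq_zero_left h0)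
  have : Nat.gcd χ.conductor d = χ.conductor := le_antisymm (Nat.le_of_dvd (Nat.pos_of_ne_zero (conductor_ne_zero χ)) h2) h1
  exact this ▸ Nat.gcd_dvd_right _ _

lemma conductor_changeLevel [NeZero q] {d : ℕ} (hd : d ∣ q) {ψ : DirichletCharacter ℂ d}
    (hψ : ψ.IsPrimitive) : (changeLevel hd ψ).conductor = d := by
  haveI : NeZero d := ⟨fun h0 => NeZero.ne q (Nat.eq_zero_of_zero_dvd (h0 ▸ hd))⟩
  set χ := changeLevel hd ψ with hχ
  have hft : χ.FactorsThrough d := ⟨hd, ψ, rfl⟩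
  have hcd : χ.conductor ∣ d := conductor_dvd_of_factorsThrough hft
  refine le_antisymm (Nat.le_of_dvd (Nat.pos_of_ne_zero (NeZero.ne d)) hcd) ?_
  have hft2 : ψ.FactorsThrough χ.conductor := by
    refine ⟨hcd, (factorsThrough_conductor χ).χ₀, ?_⟩
    have h1 : χ = changeLevel (conductor_dvd_level χ) (factorsThrough_conductor χ).χ₀ :=
      (factorsThrough_conductor χ).eq_changeLevel
    have h2 : χ = changeLevel hd (changeLevel hcd (factorsThrough_conductor χ).χ₀) := by
      rw [← changeLevel_trans _ hcd hd]; exact h1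
    exact changeLevel_injective hd (hχ.symm.trans h2)
  calc d = ψ.conductor := hψ.symm
    _ ≤ χ.conductor := Nat.sInf_le hft2


lemma card_dirichletCharacter (d : ℕ) [NeZero d] :
    Nat.card (DirichletCharacter ℂ d) = d.totient := by
  haveI : NeZero (Monoid.exponent (ZMod d)ˣ) := ⟨Monoid.exponent_ne_zero_of_finite⟩
  rw [MulChar.card_eq_card_units_of_hasEnoughRootsOfUnity, Nat.card_eq_fintype_card,
    ZMod.card_units_eq_totient]

lemma finite_dirichletCharacter (d : ℕ) [NeZero d] : Finite (DirichletCharacter ℂ d) :=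
  Nat.finite_of_card_ne_zero (by rw [card_dirichletCharacter]; exact Nat.totient_pos.mpr (Nat.pos_of_ne_zero (NeZero.ne d)) |>.ne')

/-- the equiv between primitive characters mod d and characters mod q of conductor d -/
noncomputable def primEquiv [NeZero q] {d : ℕ} (hd : d ∣ q) :
    {ψ : DirichletCharacter ℂ d // ψ.IsPrimitive} ≃ {χ : DirichletCharacter ℂ q // χ.conductor = d} := by
  refine Equiv.ofBijective (fun ψ => ⟨changeLevel hd ψ.1, conductor_changeLevel hd ψ.2⟩) ⟨?_, ?_⟩
  · intro ψ₁ ψ₂ h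
    exact Subtype.ext (changeLevel_injective hd (congrArg Subtype.val h))
  · rintro ⟨χ, hχ⟩
    subst hχ
    refine ⟨⟨χ.primitiveCharacter, χ.primitiveCharacter_isPrimitive⟩, ?_⟩
    exact Subtype.ext (factorsThrough_conductor χ).eq_changeLevel.symm

lemma sum_primitive_eq [NeZero q] :
    ∑ d ∈ q.divisors, Nat.card {χ : DirichletCharacter ℂ d // χ.IsPrimitive} = q.totient := by
  classical
  haveI : Finite (DirichletCharacter ℂ q) := finite_dirichletCharacter q
  haveI : Fintype (DirichletCharacter ℂ q) := Fintype.ofFinite _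
  rw [← card_dirichletCharacter q, Nat.card_eq_fintype_card, Fintype.card,
    Finset.card_eq_sum_card_fiberwise (f := fun χ : DirichletCharacter ℂ q => χ.conductor)
    (t := q.divisors) (fun χ _ => Nat.mem_divisors.mpr ⟨conductor_dvd_level χ, NeZero.ne q⟩)]
  refine Finset.sum_congr rfl fun d hd => ?_
  rw [← Fintype.card_subtype]
  rw [← Nat.card_eq_fintype_card, ← Nat.card_congr (primEquiv (Nat.dvd_of_mem_divisors hd))]

end StmtAux

open StmtAux in
theorem stmt_2 (q : ℕ) [NeZero q] :
    (Nat.card {χ : DirichletCharacter ℂ q // χ.IsPrimitive} : ℤ) =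
      ∑ d ∈ q.divisors, moebius d * (Nat.totient (q / d) : ℤ) := by
  have key := (sum_eq_iff_sum_mul_moebius_eq
    (f := fun d => (Nat.card {χ : DirichletCharacter ℂ d // χ.IsPrimitive} : ℤ))
    (g := fun n => (n.totient : ℤ))).mp ?_ q (Nat.pos_of_ne_zero (NeZero.ne q))
  · rw [← key,
      ← Nat.sum_divisorsAntidiagonal (f := fun d r => ((moebius d : ℤ) * ((r.totient : ℕ) : ℤ)))]
    norm_cast
  · intro n hn
    haveI : NeZero n := ⟨hn.ne'⟩
    exact_mod_cast sum_primitive_eq (q := n)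
end

section
/- The limit as h tends to 0 of (Li(1+h) − log|h|) equals the Euler–Mascheroni constant γ, where Li denotes the principal value of the logarithmic integral. -/
open Filter Topology intervalIntegral MeasureTheory Set

/-! ### Auxiliary: the regularized integrand `gg t = 1/log t + 1/(1-t)` -/

noncomputable def gg (t : ℝ) : ℝ := 1 / Real.log t + 1 / (1 - t)

lemma log_lower {t : ℝ} (ht : 0 < t) : 1 - 1/t ≤ Real.log t := by
  have := Real.log_le_sub_one_of_pos (x := 1/t) (by positivity)
  rw [Real.log_div one_ne_zero (ne_of_gt ht), Real.log_one] at this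
  linarith

lemma num_nonneg {t : ℝ} (ht : 0 < t) : 0 ≤ t - 1 - Real.log t := by
  have := Real.log_le_sub_one_of_pos ht; linarith

lemma num_le {t : ℝ} (ht : 0 < t) : t - 1 - Real.log t ≤ (t-1)^2 / t := by
  have := log_lower ht
  have h : (t-1)^2/t = t - 2 + 1/t := by field_simp; ring
  linarith

lemma gg_eq {t : ℝ} (ht : 0 < t) (ht1 : t ≠ 1) :
    gg t = (t - 1 - Real.log t) / (Real.log t * (t - 1)) := by
  have hl : Real.log t ≠ 0 := Real.log_ne_zero_of_pos_of_ne_one ht ht1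
  have ht1' : t - 1 ≠ 0 := sub_ne_zero.mpr ht1
  have ht1'' : 1 - t ≠ 0 := by intro h; apply ht1'; linarith
  rw [gg]; field_simp; ring

lemma denom_pos {t : ℝ} (ht : 0 < t) (ht1 : t ≠ 1) : 0 < Real.log t * (t - 1) := by
  rcases lt_or_gt_of_ne ht1 with h | h
  · have : Real.log t < 0 := Real.log_neg ht h
    nlinarith
  · have : 0 < Real.log t := Real.log_pos h
    nlinarith

lemma gg_nonneg {t : ℝ} (ht : 0 < t) (ht1 : t ≠ 1) : 0 ≤ gg t := by
  rw [gg_eq ht ht1]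
  exact div_nonneg (num_nonneg ht) (denom_pos ht ht1).le

lemma gg_bound {t : ℝ} (ht : t ∈ Icc (0:ℝ) 2) : |gg t| ≤ 4 := by
  obtain ⟨h0, h2⟩ := ht
  rcases eq_or_lt_of_le h0 with rfl | h0
  · norm_num [gg]
  rcases eq_or_ne t 1 with rfl | ht1
  · simp [gg]
  rcases le_or_gt t (1/4) with h14 | h14
  · have hlog : Real.log t ≤ t - 1 := Real.log_le_sub_one_of_pos h0
    have hlneg : Real.log t ≤ -(3/4) := by linarith
    have hlne : |Real.log t| ≥ 3/4 := by rw [abs_of_nonpos (by linarith)]; linarith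
    have h1 : |1 / Real.log t| ≤ 4/3 := by
      rw [abs_div, abs_one, div_le_iff₀ (by linarith)]
      linarith
    have h2' : |1 / (1 - t)| ≤ 4/3 := by
      rw [abs_div, abs_one, abs_of_pos (by linarith), div_le_iff₀ (by linarith)]
      linarith
    calc |gg t| ≤ |1/Real.log t| + |1/(1-t)| := abs_add_le _ _
      _ ≤ 4 := by linarith
  · rw [abs_of_nonneg (gg_nonneg h0 ht1), gg_eq h0 ht1]
    have hnum := num_le h0
    have hd0 := denom_pos h0 ht1
    rw [div_le_iff₀ hd0]
    have hnum2 : (t-1)^2/t ≤ 4*(t-1)^2 := by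
      rw [div_le_iff₀ h0]; nlinarith
    rcases lt_or_gt_of_ne ht1 with h | h
    · have hlog : Real.log t ≤ t - 1 := Real.log_le_sub_one_of_pos h0
      nlinarith
    · have hlog : 1 - 1/t ≤ Real.log t := log_lower h0
      have h1t : t - 1 ≤ t * Real.log t := by
        have := mul_le_mul_of_nonneg_left hlog h0.le
        calc t - 1 = t * (1 - 1/t) := by field_simp
          _ ≤ t * Real.log t := this
      have hden : (t-1)^2/2 ≤ Real.log t * (t-1) := by
        have hlog2 : (t-1)/2 ≤ Real.log t := by
          have hlp : 0 < Real.log t := Real.log_pos h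
          nlinarith
        nlinarith
      have hnum3 : (t-1)^2/t ≤ (t-1)^2 := by
        rw [div_le_iff₀ h0]; nlinarith
      nlinarith

lemma gg_meas : Measurable gg :=
  (measurable_const.div Real.measurable_log).add
    (measurable_const.div (measurable_const.sub measurable_id))

lemma gg_intble {a b : ℝ} (ha : a ∈ Icc (0:ℝ) 2) (hb : b ∈ Icc (0:ℝ) 2) :
    IntervalIntegrable gg volume a b := by
  apply IntervalIntegrable.mono_fun' (g := fun _ => 4) intervalIntegrable_const
    gg_meas.aestronglyMeasurable.restrict
  filter_upwards [ae_restrict_mem measurableSet_uIoc] with t ht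
  have : t ∈ Icc (0:ℝ) 2 := by
    rcases ht with ⟨h1, h2⟩
    exact ⟨le_trans (le_min ha.1 hb.1) (le_of_lt h1), le_trans h2 (max_le ha.2 hb.2)⟩
  simpa [Real.norm_eq_abs] using gg_bound this

lemma int_inv_sub_one {a b : ℝ} (h : (1:ℝ) ∉ uIcc a b) :
    ∫ t in a..b, 1/(t-1) = Real.log ((b-1)/(a-1)) := by
  rw [intervalIntegral.integral_comp_sub_right (fun x => 1/x) 1]
  apply integral_one_div
  intro h0
  apply h
  rw [Set.mem_uIcc] at h0 ⊢
  rcases h0 with ⟨h1, h2⟩ | ⟨h1, h2⟩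
  · left; constructor <;> linarith
  · right; constructor <;> linarith

lemma inv_one_sub_intble {a b : ℝ} (h : (1:ℝ) ∉ uIcc a b) :
    IntervalIntegrable ((fun t => 1/(1-t)) : ℝ → ℝ) volume a b := by
  apply ContinuousOn.intervalIntegrable
  apply ContinuousOn.div continuousOn_const (by fun_prop)
  intro x hx h0
  exact h (by rw [show (1:ℝ) = x by linarith]; exact hx)

/-! ### The `li` function -/

/-- The logarithmic integral `li x`, as the Cauchy principal value of `∫_0^x dt / log t`
(for `x ≤ 1` the integrand is integrable and no principal value is needed). -/
noncomputable def li (x : ℝ) : ℝ :=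
  if x ≤ 1 then ∫ t in (0:ℝ)..x, 1 / Real.log t
  else limUnder (𝓝[>] (0:ℝ)) fun ε =>
    (∫ t in (0:ℝ)..(1 - ε), 1 / Real.log t) + ∫ t in (1 + ε)..x, 1 / Real.log t

lemma int_log_eq {a b : ℝ} (ha : a ∈ Icc (0:ℝ) 2) (hb : b ∈ Icc (0:ℝ) 2)
    (h1 : (1:ℝ) ∉ uIcc a b) :
    ∫ t in a..b, 1/Real.log t = (∫ t in a..b, gg t) + Real.log ((b-1)/(a-1)) := by
  have heq : ∀ t : ℝ, 1/Real.log t = gg t - 1/(1-t) := fun t => by simp [gg]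
  simp_rw [heq]
  rw [intervalIntegral.integral_sub (gg_intble ha hb) (inv_one_sub_intble h1)]
  have : ∫ t in a..b, 1/(1-t) = -Real.log ((b-1)/(a-1)) := by
    rw [← int_inv_sub_one h1, ← intervalIntegral.integral_neg]
    congr 1 with t
    rcases eq_or_ne t 1 with rfl | ht
    · norm_num
    · have h1t : 1 - t ≠ 0 := sub_ne_zero.mpr (Ne.symm ht)
      have ht1 : t - 1 ≠ 0 := sub_ne_zero.mpr ht
      field_simp; ring
  rw [this]; ring

noncomputable def G (x : ℝ) : ℝ := ∫ t in (0:ℝ)..x, gg t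

lemma G_cont : ContinuousOn G (Icc (0:ℝ) 2) := by
  have h : IntegrableOn gg (uIcc (0:ℝ) 2) volume := by
    rw [uIcc_of_le (by norm_num), integrableOn_Icc_iff_integrableOn_Ioc]
    exact ((gg_intble (by norm_num) (by norm_num)).1 : IntegrableOn gg (Ioc 0 2) volume)
  have := intervalIntegral.continuousOn_primitive_interval (a := 0) (b := 2) h
  rwa [uIcc_of_le (by norm_num)] at this

lemma li_eq {h : ℝ} (h0 : h ≠ 0) (h1 : |h| < 1) :
    li (1 + h) = Real.log |h| + ∫ t in (0:ℝ)..(1+h), gg t := by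
  obtain ⟨hm1, hp1⟩ := abs_lt.mp h1
  rcases lt_or_gt_of_ne h0 with hneg | hpos
  · rw [li, if_pos (by linarith)]
    rw [int_log_eq (by norm_num) (by constructor <;> linarith)
      (by rw [Set.mem_uIcc]; push_neg; constructor <;> intro <;> linarith)]
    rw [show (1+h-1)/((0:ℝ)-1) = -h by ring, ← abs_of_neg hneg]
    ring
  · rw [li, if_neg (by push_neg; linarith)]
    apply Tendsto.limUnder_eq
    have hev : ∀ᶠ ε in 𝓝[>] (0:ℝ),
        ((∫ t in (0:ℝ)..(1 - ε), 1 / Real.log t) + ∫ t in (1 + ε)..(1+h), 1 / Real.log t)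
          = (∫ t in (0:ℝ)..(1-ε), gg t) + (∫ t in (1+ε)..(1+h), gg t) + Real.log h := by
      filter_upwards [Ioo_mem_nhdsGT_of_mem
        (show (0:ℝ) ∈ Ico 0 (min h 1) from ⟨le_refl _, lt_min hpos one_pos⟩)] with ε hε
      obtain ⟨hε0, hεm⟩ := hε
      have hεh : ε < h := lt_of_lt_of_le hεm (min_le_left _ _)
      have hε1 : ε < 1 := lt_of_lt_of_le hεm (min_le_right _ _)
      rw [int_log_eq (by norm_num) (by constructor <;> linarith)
        (by rw [Set.mem_uIcc]; push_neg; constructor <;> intro <;> linarith)]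
      rw [int_log_eq (by constructor <;> linarith) (by constructor <;> linarith)
        (by rw [Set.mem_uIcc]; push_neg; constructor <;> intro <;> linarith)]
      rw [show (1-ε-1)/((0:ℝ)-1) = ε by ring, show (1+h-1)/(1+ε-1) = h/ε by ring_nf]
      rw [Real.log_div (ne_of_gt hpos) (ne_of_gt hε0)]
      ring
    rw [tendsto_congr' hev]
    have habs : Real.log |h| = Real.log h := by rw [abs_of_pos hpos]
    rw [habs]
    have hsplit : ∀ᶠ ε in 𝓝[>] (0:ℝ),
        (∫ t in (1+ε)..(1+h), gg t) = G (1+h) - G (1+ε) := by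
      filter_upwards [Ioo_mem_nhdsGT_of_mem
        (show (0:ℝ) ∈ Ico 0 1 from ⟨le_refl _, one_pos⟩)] with ε hε
      obtain ⟨hε0, hε1⟩ := hε
      have := intervalIntegral.integral_add_adjacent_intervals (a := 0) (b := 1+ε) (c := 1+h)
        (gg_intble (by norm_num) (by constructor <;> linarith))
        (gg_intble (by constructor <;> linarith) (by constructor <;> linarith))
      unfold G; linarith [this]
    rw [tendsto_congr' (hsplit.mono fun ε hε => by rw [hε])]
    have hc1 : Tendsto (fun ε : ℝ => G (1 - ε)) (𝓝[>] 0) (𝓝 (G 1)) := by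
      apply (G_cont.continuousWithinAt (x := 1) (by norm_num)).tendsto.comp
      rw [tendsto_nhdsWithin_iff]
      constructor
      · have : Tendsto (fun ε : ℝ => 1 - ε) (𝓝 0) (𝓝 (1-0)) :=
          (continuous_const.sub continuous_id).tendsto 0
        simpa using this.mono_left nhdsWithin_le_nhds
      · filter_upwards [Ioo_mem_nhdsGT_of_mem
          (show (0:ℝ) ∈ Ico 0 1 from ⟨le_refl _, one_pos⟩)] with ε hε
        constructor <;> [linarith [hε.2]; linarith [hε.1]]
    have hc2 : Tendsto (fun ε : ℝ => G (1 + ε)) (𝓝[>] 0) (𝓝 (G 1)) := by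
      apply (G_cont.continuousWithinAt (x := 1) (by norm_num)).tendsto.comp
      rw [tendsto_nhdsWithin_iff]
      constructor
      · have : Tendsto (fun ε : ℝ => 1 + ε) (𝓝 0) (𝓝 (1+0)) :=
          (continuous_const.add continuous_id).tendsto 0
        simpa using this.mono_left nhdsWithin_le_nhds
      · filter_upwards [Ioo_mem_nhdsGT_of_mem
          (show (0:ℝ) ∈ Ico 0 1 from ⟨le_refl _, one_pos⟩)] with ε hε
        constructor <;> [linarith [hε.1]; linarith [hε.2]]
    have : Tendsto (fun ε : ℝ => G (1-ε) + (G (1+h) - G (1+ε)) + Real.log h) (𝓝[>] 0)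
        (𝓝 (G 1 + (G (1+h) - G 1) + Real.log h)) :=
      ((hc1.add (tendsto_const_nhds.sub hc2)).add tendsto_const_nhds)
    rw [show Real.log h + ∫ t in (0:ℝ)..(1+h), gg t
        = G 1 + (G (1+h) - G 1) + Real.log h by unfold G; ring]
    exact this

/-! ### `∫_0^1 gg = γ` via Fubini and harmonic numbers -/

lemma fubini_B1 (N : ℕ) :
    ∫ t in (0:ℝ)..1, (t^N - 1)/Real.log t = Real.log ((N:ℝ)+1) := by
  set μ1 := volume.restrict (Ioc (0:ℝ) 1) with hμ1
  set μ2 := volume.restrict (Ioc (0:ℝ) (N:ℝ)) with hμ2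
  set f : ℝ → ℝ → ℝ := fun t x => Real.exp (Real.log t * x) with hf
  have hmeas : Measurable (Function.uncurry f) :=
    ((Real.measurable_log.comp measurable_fst).mul measurable_snd).exp
  have hint : Integrable (Function.uncurry f) (μ1.prod μ2) := by
    apply Integrable.mono' (integrable_const 1) hmeas.aestronglyMeasurable
    rw [hμ1, hμ2, Measure.prod_restrict]
    filter_upwards [ae_restrict_mem (measurableSet_Ioc.prod measurableSet_Ioc)] with p hp
    obtain ⟨⟨ht0, ht1⟩, ⟨hx0, hxN⟩⟩ := hp
    have hlog : Real.log p.1 ≤ 0 := Real.log_nonpos ht0.le ht1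
    have : Real.log p.1 * p.2 ≤ 0 := mul_nonpos_of_nonpos_of_nonneg hlog hx0.le
    simp only [Function.uncurry, hf, Real.norm_eq_abs, abs_of_pos (Real.exp_pos _)]
    exact Real.exp_le_one_iff.mpr this
  have hswap := integral_integral_swap hint
  have hLHS : (∫ t, ∫ x, f t x ∂μ2 ∂μ1) = ∫ t in (0:ℝ)..1, (t^N - 1)/Real.log t := by
    rw [intervalIntegral.integral_of_le zero_le_one, hμ1]
    apply setIntegral_congr_ae measurableSet_Ioc
    filter_upwards [compl_mem_ae_iff.mpr (Real.volume_singleton (a := (1:ℝ)))] with t ht1 htm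
    obtain ⟨ht0, ht1'⟩ := htm
    have ht1'' : t < 1 := lt_of_le_of_ne ht1' ht1
    have hlne : Real.log t ≠ 0 := ne_of_lt (Real.log_neg ht0 ht1'')
    rw [hμ2, ← intervalIntegral.integral_of_le (Nat.cast_nonneg N)]
    have hd : ∀ x ∈ uIcc (0:ℝ) (N:ℝ), HasDerivAt
        (fun x => Real.exp (Real.log t * x) / Real.log t) (f t x) x := by
      intro x _
      have h1 : HasDerivAt (fun x : ℝ => Real.log t * x) (Real.log t) x := by
        simpa using (hasDerivAt_id x).const_mul (Real.log t)
      have h2 := (h1.exp).div_const (Real.log t)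
      have e : f t x = Real.exp (Real.log t * x) * Real.log t / Real.log t := by
        simp only [hf]; field_simp
      rw [e]; exact h2
    rw [intervalIntegral.integral_eq_sub_of_hasDerivAt hd
      (((Real.continuous_exp.comp (continuous_const.mul continuous_id)).continuousOn).intervalIntegrable)]
    rw [mul_comm (Real.log t) (N:ℝ), Real.exp_nat_mul, Real.exp_log ht0]
    rw [mul_zero, Real.exp_zero, div_sub_div_same]
  have hRHS : (∫ x, ∫ t, f t x ∂μ1 ∂μ2) = Real.log ((N:ℝ)+1) := by
    have hinner : ∀ x ∈ Ioc (0:ℝ) (N:ℝ), (∫ t, f t x ∂μ1) = 1/(x+1) := by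
      intro x ⟨hx0, _⟩
      have : (∫ t, f t x ∂μ1) = ∫ t in Ioc (0:ℝ) 1, t ^ x := by
        rw [hμ1]
        apply setIntegral_congr_ae measurableSet_Ioc
        filter_upwards with t htm
        rw [hf]; exact (Real.rpow_def_of_pos htm.1 x).symm
      rw [this, ← intervalIntegral.integral_of_le zero_le_one,
        integral_rpow (Or.inl (by linarith))]
      rw [Real.one_rpow, Real.zero_rpow (by positivity)]
      norm_num
    have : (∫ x, ∫ t, f t x ∂μ1 ∂μ2) = ∫ x in Ioc (0:ℝ) (N:ℝ), 1/(x+1) := by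
      rw [hμ2]
      exact setIntegral_congr_ae measurableSet_Ioc (.of_forall hinner)
    rw [this, ← intervalIntegral.integral_of_le (Nat.cast_nonneg N)]
    have hcomp := intervalIntegral.integral_comp_sub_right (fun u => 1/u) (-1)
      (a := 0) (b := (N:ℝ))
    simp only [sub_neg_eq_add, zero_add] at hcomp
    rw [hcomp, integral_one_div]
    · rw [div_one]
    · rw [Set.mem_uIcc]; push_neg
      constructor <;> intro <;> [linarith; linarith [Nat.cast_nonneg (α := ℝ) N]]
  rw [← hLHS, hswap, hRHS]

lemma gg_identity {t : ℝ} (ht0 : 0 < t) (ht1 : t < 1) (N : ℕ) :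
    gg t = (∑ n ∈ Finset.range N, t^n) - (t^N - 1)/Real.log t + t^N * gg t := by
  have hl : Real.log t ≠ 0 := ne_of_lt (Real.log_neg ht0 ht1)
  have ht1' : t - 1 ≠ 0 := by intro h; nlinarith [h]
  have h1t : 1 - t ≠ 0 := by intro h; nlinarith [h]
  have hgeom : (∑ n ∈ Finset.range N, t^n) = (t^N - 1)/(t-1) := by
    rw [geom_sum_eq (by intro h; rw [h] at ht1; linarith)]
  rw [hgeom, gg]
  field_simp
  ring

lemma pow_one_sub_le {t : ℝ} (ht0 : 0 ≤ t) (ht1 : t ≤ 1) (N : ℕ) :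
    1 - t^N ≤ N * (1 - t) := by
  have := geom_sum_mul t N
  have hsum : (∑ i ∈ Finset.range N, t^i) ≤ N := by
    calc (∑ i ∈ Finset.range N, t^i) ≤ ∑ i ∈ Finset.range N, 1 :=
      Finset.sum_le_sum fun i _ => pow_le_one₀ ht0 ht1
    _ = N := by simp
  nlinarith [this, hsum, pow_le_one₀ ht0 ht1 (n := N)]

lemma pow_div_log_intble (N : ℕ) :
    IntervalIntegrable (fun t => (t^N - 1)/Real.log t) volume 0 1 := by
  apply IntervalIntegrable.mono_fun' (g := fun _ => (N:ℝ)) intervalIntegrable_const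
    ((((continuous_pow N).measurable).sub measurable_const).div
      Real.measurable_log).aestronglyMeasurable.restrict
  filter_upwards [ae_restrict_mem measurableSet_uIoc] with t ht
  rw [Set.uIoc_of_le zero_le_one] at ht
  obtain ⟨ht0, ht1⟩ := ht
  rcases eq_or_lt_of_le ht1 with rfl | ht1'
  · simp
  · have hlneg : Real.log t < 0 := Real.log_neg ht0 ht1'
    have hlb : 1 - t ≤ -Real.log t := by
      have := Real.log_le_sub_one_of_pos ht0; linarith
    have htN : t^N ≤ 1 := pow_le_one₀ ht0.le ht1'.le
    simp only [Pi.div_apply, Pi.sub_apply]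
    rw [Real.norm_eq_abs, abs_div, abs_of_nonpos (by nlinarith), abs_of_neg hlneg]
    rw [div_le_iff₀ (by linarith)]
    calc -(t^N - 1) = 1 - t^N := by ring
      _ ≤ N * (1-t) := pow_one_sub_le ht0.le ht1'.le N
      _ ≤ N * -Real.log t := by
          apply mul_le_mul_of_nonneg_left hlb (Nat.cast_nonneg N)

lemma pow_gg_intble (N : ℕ) : IntervalIntegrable (fun t => t^N * gg t) volume 0 1 := by
  apply IntervalIntegrable.mono_fun' (g := fun _ => 4) intervalIntegrable_const
    (((continuous_pow N).measurable).mul gg_meas).aestronglyMeasurable.restrict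
  filter_upwards [ae_restrict_mem measurableSet_uIoc] with t ht
  rw [Set.uIoc_of_le zero_le_one] at ht
  obtain ⟨ht0, ht1⟩ := ht
  have h1 : |t^N| ≤ 1 := by
    rw [abs_of_nonneg (by positivity)]; exact pow_le_one₀ ht0.le ht1
  have h2 : |gg t| ≤ 4 := gg_bound ⟨ht0.le, by linarith⟩
  simp only [Pi.mul_apply]
  rw [Real.norm_eq_abs, abs_mul]
  nlinarith [abs_nonneg (gg t), abs_nonneg (t^N)]

lemma integral_gg_eq (N : ℕ) :
    ∫ t in (0:ℝ)..1, gg t =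
      (harmonic N : ℝ) - Real.log ((N:ℝ)+1) + ∫ t in (0:ℝ)..1, t^N * gg t := by
  have hsum_int : IntervalIntegrable (fun t => ∑ n ∈ Finset.range N, t^n) volume 0 1 :=
    (continuous_finset_sum _ fun n _ => continuous_pow n).intervalIntegrable _ _
  have hcongr : ∫ t in (0:ℝ)..1, gg t = ∫ t in (0:ℝ)..1,
      ((∑ n ∈ Finset.range N, t^n) - (t^N - 1)/Real.log t + t^N * gg t) := by
    apply intervalIntegral.integral_congr_ae
    filter_upwards [compl_mem_ae_iff.mpr (Real.volume_singleton (a := (1:ℝ)))] with t ht1 htm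
    rw [Set.uIoc_of_le zero_le_one] at htm
    exact gg_identity htm.1 (lt_of_le_of_ne htm.2 ht1) N
  rw [hcongr, intervalIntegral.integral_add ((hsum_int).sub (pow_div_log_intble N))
    (pow_gg_intble N), intervalIntegral.integral_sub hsum_int (pow_div_log_intble N)]
  rw [fubini_B1 N, intervalIntegral.integral_finset_sum
    (fun n _ => (continuous_pow n).intervalIntegrable _ _)]
  have : ∀ n ∈ Finset.range N, (∫ t in (0:ℝ)..1, t^n) = 1/((n:ℝ)+1) := by
    intro n _
    rw [integral_pow]; norm_num
  rw [Finset.sum_congr rfl this]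
  have hharm : (harmonic N : ℝ) = ∑ n ∈ Finset.range N, 1/((n:ℝ)+1) := by
    rw [harmonic]; push_cast; simp [one_div]
  rw [hharm]

lemma tail_bound (N : ℕ) : |∫ t in (0:ℝ)..1, t^N * gg t| ≤ 4/((N:ℝ)+1) := by
  calc |∫ t in (0:ℝ)..1, t^N * gg t| ≤ ∫ t in (0:ℝ)..1, |t^N * gg t| :=
        intervalIntegral.abs_integral_le_integral_abs zero_le_one
    _ ≤ ∫ t in (0:ℝ)..1, 4 * t^N := by
        apply intervalIntegral.integral_mono_on zero_le_one ((pow_gg_intble N).abs)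
          ((continuous_const.mul (continuous_pow N)).intervalIntegrable _ _)
        intro t ⟨ht0, ht1⟩
        rw [abs_mul, abs_of_nonneg (pow_nonneg ht0 N)]
        have := gg_bound ⟨ht0, by linarith⟩
        simp only [Pi.mul_apply]
        nlinarith [pow_nonneg ht0 N]
    _ = 4/((N:ℝ)+1) := by
        rw [intervalIntegral.integral_const_mul, integral_pow]; norm_num; ring

lemma integral_gg : ∫ t in (0:ℝ)..1, gg t = Real.eulerMascheroniConstant := by
  have htail : Tendsto (fun N : ℕ => ∫ t in (0:ℝ)..1, t^N * gg t) atTop (𝓝 0) := by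
    apply squeeze_zero_norm (fun N => by simpa using tail_bound N)
    have := tendsto_one_div_add_atTop_nhds_zero_nat.const_mul (4:ℝ)
    simp only [mul_zero] at this
    convert this using 2 with N
    rw [mul_one_div]
  have hmain := Real.tendsto_harmonic_sub_log_add_one
  have : Tendsto (fun N : ℕ => (harmonic N : ℝ) - Real.log ((N:ℝ)+1)
      + ∫ t in (0:ℝ)..1, t^N * gg t) atTop (𝓝 (Real.eulerMascheroniConstant + 0)) :=
    hmain.add htail
  rw [add_zero] at this
  have hconst : ∀ N : ℕ, (harmonic N : ℝ) - Real.log ((N:ℝ)+1)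
      + (∫ t in (0:ℝ)..1, t^N * gg t) = ∫ t in (0:ℝ)..1, gg t :=
    fun N => by rw [integral_gg_eq N]
  rw [tendsto_congr hconst] at this
  exact (tendsto_nhds_unique tendsto_const_nhds this)

/-! ### Main theorem -/

theorem stmt_3 :
    Tendsto (fun h : ℝ => li (1 + h) - Real.log |h|) (𝓝[≠] (0:ℝ))
      (𝓝 Real.eulerMascheroniConstant) := by
  have hev : ∀ᶠ h in 𝓝[≠] (0:ℝ),
      li (1 + h) - Real.log |h| = ∫ t in (0:ℝ)..(1+h), gg t := by
    have hball : ∀ᶠ h in 𝓝 (0:ℝ), |h| < 1 := by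
      have := Metric.ball_mem_nhds (0:ℝ) one_pos
      filter_upwards [this] with h hh
      simpa [Real.dist_eq] using hh
    filter_upwards [self_mem_nhdsWithin, eventually_nhdsWithin_of_eventually_nhds hball]
      with h h0 h1
    rw [li_eq h0 h1]; ring
  rw [tendsto_congr' hev, ← integral_gg]
  have : Tendsto (fun h : ℝ => G (1 + h)) (𝓝[≠] (0:ℝ)) (𝓝 (G 1)) := by
    apply (G_cont.continuousWithinAt (x := 1) (by norm_num)).tendsto.comp
    rw [tendsto_nhdsWithin_iff]
    constructor
    · have : Tendsto (fun h : ℝ => 1 + h) (𝓝 0) (𝓝 (1+0)) :=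
        (continuous_const.add continuous_id).tendsto 0
      simpa using this.mono_left nhdsWithin_le_nhds
    · apply eventually_nhdsWithin_of_eventually_nhds
      have := Metric.ball_mem_nhds (0:ℝ) one_pos
      filter_upwards [this] with h hh
      have : |h| < 1 := by simpa [Real.dist_eq] using hh
      obtain ⟨hm1, hp1⟩ := abs_lt.mp this
      constructor <;> [linarith; linarith]
  exact this
end
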